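/- Riedtmann-Peng formula: for finite modules M, N, L over a finitary ring (e.g. finite-length 𝔽_q[x]-modules supported at x), the number F^L_{MN} of submodules X ⊆ L with X ≅ N and L/X ≅ M satisfies F^L_{MN} = (|Ext^1(M,N)_L| / |Hom(M,N)|) · (|Aut L| / (|Aut M|·|Aut N|)), where Ext^1(M,N)_L ⊆ Ext^1(M,N) is the subset of extension classes whose middle term is isomorphic to L. -/

import Mathlib

/- STATEMENT 17: Riedtmann-Peng formula.  For finite nilpotent 𝔽_q[x]-modules
M, N, L (finite length, annihilated by a power of x),
   F^L_{MN} = (|Ext¹(M,N)_L| / |Hom(M,N)|) · (|Aut L| / (|Aut M|·|Aut N|)),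
where F^L_{MN} counts submodules X ⊆ L with X ≅ N and L/X ≅ M, and Ext¹(M,N)_L is
the set of Yoneda classes of extensions 0 → N → E → M → 0 with middle term E ≅ L,
realized as the set of exact pairs (f : N ↪ L, g : L ↠ M) modulo the equivalence
given by automorphisms of the middle term L. -/

open Polynomial

variable (A : Type*) [CommRing A]
variable (M N L : Type*) [AddCommGroup M] [AddCommGroup N] [AddCommGroup L]
  [Module A M] [Module A N] [Module A L]

/-- Short exact sequences 0 → N → L → M → 0 with prescribed middle term L. -/
def SES : Type _ :=
  {fg : (N →ₗ[A] L) × (L →ₗ[A] M) //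
    Function.Injective fg.1 ∧ Function.Surjective fg.2 ∧
      LinearMap.range fg.1 = LinearMap.ker fg.2}

/-- Yoneda equivalence of two such sequences: an automorphism of L compatible with
the identity maps on N and M. -/
def sesEquiv : SES A M N L → SES A M N L → Prop := fun x y =>
  ∃ φ : L ≃ₗ[A] L, (φ.toLinearMap ∘ₗ x.1.1 = y.1.1) ∧ (y.1.2 ∘ₗ φ.toLinearMap = x.1.2)

/-- Ext¹(M,N)_L : extension classes of M by N with middle term isomorphic to L. -/
def ExtClasses : Type _ := Quot (sesEquiv A M N L)

section Aux

variable {A : Type*} [CommRing A] {M N L : Type*}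
  [AddCommGroup M] [AddCommGroup N] [AddCommGroup L]
  [Module A M] [Module A N] [Module A L]

namespace RP

lemma gf_zero (s : SES A M N L) (n : N) : s.1.2 (s.1.1 n) = 0 := by
  have h : s.1.1 n ∈ LinearMap.ker s.1.2 := s.2.2.2 ▸ LinearMap.mem_range_self _ n
  exact h

/-! ### The action of Aut(L) on short exact sequences -/

noncomputable instance : SMul (L ≃ₗ[A] L) (SES A M N L) where
  smul φ s := ⟨(φ.toLinearMap ∘ₗ s.1.1, s.1.2 ∘ₗ φ.symm.toLinearMap),
    φ.injective.comp s.2.1, s.2.2.1.comp φ.symm.surjective, by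
      rw [LinearMap.range_comp, LinearMap.ker_comp, s.2.2.2]
      simp [Submodule.map_equiv_eq_comap_symm]⟩

lemma smul_f (φ : L ≃ₗ[A] L) (s : SES A M N L) :
    (φ • s).1.1 = φ.toLinearMap ∘ₗ s.1.1 := rfl

lemma smul_g (φ : L ≃ₗ[A] L) (s : SES A M N L) :
    (φ • s).1.2 = s.1.2 ∘ₗ φ.symm.toLinearMap := rfl

noncomputable instance : MulAction (L ≃ₗ[A] L) (SES A M N L) where
  one_smul s := Subtype.ext (Prod.ext (by ext n; rfl) (by ext l; rfl))
  mul_smul φ ψ s := Subtype.ext (Prod.ext (by ext n; rfl) (by ext l; rfl))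

lemma sesEquiv_iff_exists_smul (x y : SES A M N L) :
    sesEquiv A M N L x y ↔ ∃ φ : (L ≃ₗ[A] L), φ • x = y := by
  constructor
  · rintro ⟨φ, h1, h2⟩
    refine ⟨φ, Subtype.ext (Prod.ext h1 ?_)⟩
    rw [smul_g]
    ext l
    have := congrArg (fun (u : L →ₗ[A] M) => u (φ.symm l)) h2
    simpa using this.symm
  · rintro ⟨φ, rfl⟩
    refine ⟨φ, rfl, ?_⟩
    rw [smul_g]
    ext l
    simp

/-- Ext classes are the orbits of the Aut(L)-action on exact pairs. -/
noncomputable def extEquivOrbits :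
    ExtClasses A M N L ≃ MulAction.orbitRel.Quotient (L ≃ₗ[A] L) (SES A M N L) :=
  Quot.congr (Equiv.refl _) (by
    intro a b
    simp only [Equiv.refl_apply]
    rw [sesEquiv_iff_exists_smul]
    constructor
    · rintro ⟨φ, rfl⟩
      exact MulAction.mem_orbit_iff.2 ⟨φ⁻¹, inv_smul_smul φ a⟩
    · intro h
      obtain ⟨φ, hφ⟩ := MulAction.mem_orbit_iff.1 h
      exact ⟨φ⁻¹, by rw [← hφ, inv_smul_smul]⟩)

/-! ### The stabilizer of an exact pair is Hom(M, N) -/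

/-- The automorphism `1 + f ∘ h ∘ g` of `L` attached to `h : M →ₗ N`. -/
noncomputable def stabOfHom (s : SES A M N L) (h : M →ₗ[A] N) : L ≃ₗ[A] L :=
  LinearEquiv.ofLinear (LinearMap.id + s.1.1 ∘ₗ h ∘ₗ s.1.2)
    (LinearMap.id - s.1.1 ∘ₗ h ∘ₗ s.1.2)
    (by ext l; simp [LinearMap.comp_apply, map_sub, gf_zero s])
    (by ext l; simp [LinearMap.comp_apply, map_add, gf_zero s])

lemma stabOfHom_apply (s : SES A M N L) (h : M →ₗ[A] N) (l : L) :
    stabOfHom s h l = l + s.1.1 (h (s.1.2 l)) := rfl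

lemma stabOfHom_symm_apply (s : SES A M N L) (h : M →ₗ[A] N) (l : L) :
    (stabOfHom s h).symm l = l - s.1.1 (h (s.1.2 l)) := rfl

lemma stabOfHom_mem (s : SES A M N L) (h : M →ₗ[A] N) :
    stabOfHom s h ∈ MulAction.stabilizer (L ≃ₗ[A] L) s := by
  refine Subtype.ext (Prod.ext ?_ ?_)
  · rw [smul_f]
    ext n
    simp [LinearMap.comp_apply, stabOfHom_apply, gf_zero s]
  · rw [smul_g]
    ext l
    simp [LinearMap.comp_apply, stabOfHom_symm_apply, map_sub, gf_zero s]

lemma stabOfHom_bijective (s : SES A M N L) :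
    Function.Bijective (fun h : M →ₗ[A] N =>
      (⟨stabOfHom s h, stabOfHom_mem s h⟩ :
        MulAction.stabilizer (L ≃ₗ[A] L) s)) := by
  obtain ⟨⟨f, g⟩, hinj, hsurj, hexact⟩ := s
  constructor
  · intro h h' hh
    have key : ∀ l : L, f (h (g l)) = f (h' (g l)) := by
      intro l
      have := congrArg (fun φ : MulAction.stabilizer (L ≃ₗ[A] L) _ => (φ : L ≃ₗ[A] L) l) hh
      exact add_left_cancel (this : l + f (h (g l)) = l + f (h' (g l)))
    ext m
    obtain ⟨l, rfl⟩ := hsurj m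
    exact hinj (key l)
  · rintro ⟨φ, hφ⟩
    have h1 : ∀ n, φ (f n) = f n := by
      intro n
      have := congrArg (fun t : SES A M N L => t.1.1 n) hφ
      exact this
    have h2 : ∀ l, g (φ l) = g l := by
      intro l
      have := congrArg (fun t : SES A M N L => t.1.2 (φ l)) hφ
      have h' : g (φ l) = g (φ.symm (φ l)) := this.symm
      simpa using h'
    -- build h : M →ₗ N with f ∘ h ∘ g = φ - 1
    set ψ : L →ₗ[A] L := φ.toLinearMap - LinearMap.id with hψ
    have hker : LinearMap.ker g ≤ LinearMap.ker ψ := by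
      intro x hx
      rw [← hexact] at hx
      obtain ⟨n, rfl⟩ := hx
      simp [hψ, LinearMap.sub_apply, h1 n]
    set ψ' : (L ⧸ LinearMap.ker g) →ₗ[A] L := Submodule.liftQ _ ψ hker with hψ'
    have hrange : ∀ q, ψ' q ∈ LinearMap.range f := by
      intro q
      obtain ⟨l, rfl⟩ := Submodule.Quotient.mk_surjective _ q
      rw [hexact]
      have : ψ' (Submodule.Quotient.mk l) = φ l - l := by
        simp [hψ', hψ, Submodule.liftQ_apply]
      rw [this]
      simp [LinearMap.mem_ker, map_sub, h2 l]
    set ψ'' : (L ⧸ LinearMap.ker g) →ₗ[A] (LinearMap.range f) :=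
      LinearMap.codRestrict _ ψ' hrange with hψ''
    set e : (L ⧸ LinearMap.ker g) ≃ₗ[A] M := g.quotKerEquivOfSurjective hsurj with he
    set h : M →ₗ[A] N :=
      (LinearEquiv.ofInjective f hinj).symm.toLinearMap ∘ₗ ψ'' ∘ₗ e.symm.toLinearMap with hh
    refine ⟨h, ?_⟩
    apply Subtype.ext
    apply LinearEquiv.toLinearMap_injective
    ext l
    have hel : e (Submodule.Quotient.mk l) = g l := rfl
    have hesymm : e.symm (g l) = Submodule.Quotient.mk l := by
      rw [← hel, LinearEquiv.symm_apply_apply]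
    have hfh : ∀ y : LinearMap.range f, f ((LinearEquiv.ofInjective f hinj).symm y) = y.1 := by
      intro y
      conv_rhs => rw [← (LinearEquiv.ofInjective f hinj).apply_symm_apply y]
      rw [LinearEquiv.ofInjective_apply]
    have : f (h (g l)) = φ l - l := by
      rw [hh]
      simp only [LinearMap.comp_apply, LinearEquiv.coe_coe]
      rw [hesymm, hfh]
      show ψ' (Submodule.Quotient.mk l) = φ l - l
      simp [hψ', hψ, Submodule.liftQ_apply]
    show stabOfHom _ h l = φ l
    show l + f (h (g l)) = φ l
    rw [this]; abel

/-- The stabilizer of an exact pair is in bijection with Hom(M, N). -/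
noncomputable def stabEquivHom (s : SES A M N L) :
    (MulAction.stabilizer (L ≃ₗ[A] L) s) ≃ (M →ₗ[A] N) :=
  (Equiv.ofBijective _ (stabOfHom_bijective s)).symm

/-- Counting identity B: |SES| * |Hom(M,N)| = |Ext(M,N)_L| * |Aut L|. -/
lemma cardB :
    Nat.card (SES A M N L) * Nat.card (M →ₗ[A] N)
      = Nat.card (ExtClasses A M N L) * Nat.card (L ≃ₗ[A] L) := by
  rw [← Nat.card_prod, ← Nat.card_prod]
  refine Nat.card_congr ?_
  calc (SES A M N L) × (M →ₗ[A] N)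
      ≃ (Σ ω : MulAction.orbitRel.Quotient (L ≃ₗ[A] L) (SES A M N L),
          MulAction.orbit (L ≃ₗ[A] L) ω.out) × (M →ₗ[A] N) :=
        Equiv.prodCongr (MulAction.selfEquivSigmaOrbits (L ≃ₗ[A] L) (SES A M N L))
          (Equiv.refl _)
    _ ≃ Σ ω : MulAction.orbitRel.Quotient (L ≃ₗ[A] L) (SES A M N L),
          (MulAction.orbit (L ≃ₗ[A] L) ω.out) × (M →ₗ[A] N) :=
        Equiv.sigmaProdDistrib _ _
    _ ≃ Σ _ : MulAction.orbitRel.Quotient (L ≃ₗ[A] L) (SES A M N L), (L ≃ₗ[A] L) :=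
        Equiv.sigmaCongrRight fun ω =>
          (Equiv.prodCongr (MulAction.orbitEquivQuotientStabilizer (L ≃ₗ[A] L) ω.out)
            (stabEquivHom ω.out).symm).trans
            (Subgroup.groupEquivQuotientProdSubgroup).symm
    _ ≃ (MulAction.orbitRel.Quotient (L ≃ₗ[A] L) (SES A M N L)) × (L ≃ₗ[A] L) :=
        Equiv.sigmaEquivProd _ _
    _ ≃ (ExtClasses A M N L) × (L ≃ₗ[A] L) :=
        Equiv.prodCongr (extEquivOrbits).symm (Equiv.refl _)

/-! ### Counting exact pairs via good submodules -/

/-- Submodules of `L` isomorphic to `N` with quotient isomorphic to `M`. -/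
def Good (A M N L : Type*) [CommRing A]
    [AddCommGroup M] [AddCommGroup N] [AddCommGroup L]
    [Module A M] [Module A N] [Module A L] : Type _ :=
  {X : Submodule A L // Nonempty (X ≃ₗ[A] N) ∧ Nonempty ((L ⧸ X) ≃ₗ[A] M)}

/-- The image-submodule map from exact pairs to good submodules. -/
noncomputable def toGood (s : SES A M N L) : Good A M N L :=
  ⟨LinearMap.range s.1.1,
    ⟨(LinearEquiv.ofInjective s.1.1 s.2.1).symm⟩,
    ⟨(Submodule.quotEquivOfEq _ _ s.2.2.2).trans
      (s.1.2.quotKerEquivOfSurjective s.2.2.1)⟩⟩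

/-- The fiber of `toGood` over `X` is (isos N ≃ X) × (isos L/X ≃ M). -/
noncomputable def fiberEquiv (X : Good A M N L) :
    {s : SES A M N L // toGood s = X} ≃
      ((N ≃ₗ[A] X.1) × ((L ⧸ X.1) ≃ₗ[A] M)) where
  toFun := fun sp =>
    ((LinearEquiv.ofInjective sp.1.1.1 sp.1.2.1).trans
        (LinearEquiv.ofEq _ _
          (congrArg Subtype.val sp.2 : LinearMap.range sp.1.1.1 = X.1)),
      (Submodule.quotEquivOfEq X.1 (LinearMap.ker sp.1.1.2)
        (by
          rw [← (congrArg Subtype.val sp.2 : LinearMap.range sp.1.1.1 = X.1)]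
          exact sp.1.2.2.2)).trans
        (sp.1.1.2.quotKerEquivOfSurjective sp.1.2.2.1))
  invFun := fun (e, e') =>
    ⟨⟨(X.1.subtype ∘ₗ e.toLinearMap, e'.toLinearMap ∘ₗ X.1.mkQ),
      X.1.injective_subtype.comp e.injective,
      e'.surjective.comp X.1.mkQ_surjective,
      by
        rw [LinearMap.range_comp, LinearMap.ker_comp, LinearEquiv.range,
          Submodule.map_top, Submodule.range_subtype]
        rw [LinearEquiv.ker, Submodule.comap_bot, Submodule.ker_mkQ]⟩,
      by
        apply Subtype.ext
        show LinearMap.range (X.1.subtype ∘ₗ e.toLinearMap) = X.1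
        rw [LinearMap.range_comp, LinearEquiv.range, Submodule.map_top,
          Submodule.range_subtype]⟩
  left_inv := by
    rintro ⟨s, hs⟩
    apply Subtype.ext
    apply Subtype.ext
    apply Prod.ext
    · ext n
      rfl
    · ext l
      rfl
  right_inv := by
    rintro ⟨e, e'⟩
    apply Prod.ext
    · apply LinearEquiv.toLinearMap_injective
      ext n
      rfl
    · apply LinearEquiv.toLinearMap_injective
      ext q
      rfl

/-- Composition on the left with a fixed iso. -/
def congrLeftEquiv {α β γ : Type*} [AddCommGroup α] [AddCommGroup β] [AddCommGroup γ]
    [Module A α] [Module A β] [Module A γ] (e : α ≃ₗ[A] β) :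
    (α ≃ₗ[A] γ) ≃ (β ≃ₗ[A] γ) where
  toFun t := e.symm.trans t
  invFun t := e.trans t
  left_inv t := by ext x; simp
  right_inv t := by ext x; simp

/-- Composition on the right with a fixed iso. -/
def congrRightEquiv {α β γ : Type*} [AddCommGroup α] [AddCommGroup β] [AddCommGroup γ]
    [Module A α] [Module A β] [Module A γ] (e : α ≃ₗ[A] β) :
    (γ ≃ₗ[A] α) ≃ (γ ≃ₗ[A] β) where
  toFun t := t.trans e
  invFun t := t.trans e.symm
  left_inv t := by ext x; simp
  right_inv t := by ext x; simp

/-- Counting identity A: |SES| = |Good| * (|Aut N| * |Aut M|). -/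
lemma cardA :
    Nat.card (SES A M N L)
      = Nat.card (Good A M N L) * (Nat.card (N ≃ₗ[A] N) * Nat.card (M ≃ₗ[A] M)) := by
  rw [← Nat.card_prod, ← Nat.card_prod]
  refine Nat.card_congr ?_
  calc SES A M N L
      ≃ Σ X : Good A M N L, {s : SES A M N L // toGood s = X} :=
        (Equiv.sigmaFiberEquiv toGood).symm
    _ ≃ Σ _ : Good A M N L, ((N ≃ₗ[A] N) × (M ≃ₗ[A] M)) :=
        Equiv.sigmaCongrRight fun X =>
          (fiberEquiv X).trans
            (Equiv.prodCongr (congrRightEquiv X.2.1.some)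
              (congrLeftEquiv X.2.2.some))
    _ ≃ (Good A M N L) × ((N ≃ₗ[A] N) × (M ≃ₗ[A] M)) := Equiv.sigmaEquivProd _ _

end RP

end Aux

theorem riedtmann_peng (F : Type*) [Field F] [Fintype F]
    (M N L : Type*) [AddCommGroup M] [AddCommGroup N] [AddCommGroup L]
    [Module (Polynomial F) M] [Module (Polynomial F) N] [Module (Polynomial F) L]
    [Finite M] [Finite N] [Finite L]
    (hM : ∃ k, ∀ x : M, (Polynomial.X : Polynomial F) ^ k • x = 0)
    (hN : ∃ k, ∀ x : N, (Polynomial.X : Polynomial F) ^ k • x = 0)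
    (hL : ∃ k, ∀ x : L, (Polynomial.X : Polynomial F) ^ k • x = 0) :
    (Nat.card {X : Submodule (Polynomial F) L //
        Nonempty (X ≃ₗ[Polynomial F] N) ∧ Nonempty ((L ⧸ X) ≃ₗ[Polynomial F] M)} : ℚ)
      = ((Nat.card (ExtClasses (Polynomial F) M N L) : ℚ)
            / (Nat.card (M →ₗ[Polynomial F] N) : ℚ)) *
        ((Nat.card (L ≃ₗ[Polynomial F] L) : ℚ)
            / ((Nat.card (M ≃ₗ[Polynomial F] M) : ℚ) * (Nat.card (N ≃ₗ[Polynomial F] N) : ℚ))) := by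
  set A := Polynomial F
  have finHom : Finite (M →ₗ[A] N) :=
    Finite.of_injective (fun f => (f : M → N)) DFunLike.coe_injective
  have finAutM : Finite (M ≃ₗ[A] M) :=
    Finite.of_injective (fun f => (f : M → M)) DFunLike.coe_injective
  have finAutN : Finite (N ≃ₗ[A] N) :=
    Finite.of_injective (fun f => (f : N → N)) DFunLike.coe_injective
  have hHom : 0 < Nat.card (M →ₗ[A] N) := Nat.card_pos
  have hAutM : 0 < Nat.card (M ≃ₗ[A] M) := Nat.card_pos
  have hAutN : 0 < Nat.card (N ≃ₗ[A] N) := Nat.card_pos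
  have h1 := RP.cardA (A := A) (M := M) (N := N) (L := L)
  have h2 := RP.cardB (A := A) (M := M) (N := N) (L := L)
  have key : (Nat.card (RP.Good A M N L) : ℚ)
      * (Nat.card (N ≃ₗ[A] N) : ℚ) * (Nat.card (M ≃ₗ[A] M) : ℚ) * (Nat.card (M →ₗ[A] N) : ℚ)
      = (Nat.card (ExtClasses A M N L) : ℚ) * (Nat.card (L ≃ₗ[A] L) : ℚ) := by
    rw [h1] at h2
    exact_mod_cast congrArg (Nat.cast : ℕ → ℚ) (by linarith [h2] : 
      Nat.card (RP.Good A M N L) * Nat.card (N ≃ₗ[A] N) * Nat.card (M ≃ₗ[A] M)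
        * Nat.card (M →ₗ[A] N)
      = Nat.card (ExtClasses A M N L) * Nat.card (L ≃ₗ[A] L))
  have hGood : Nat.card {X : Submodule A L //
      Nonempty (X ≃ₗ[A] N) ∧ Nonempty ((L ⧸ X) ≃ₗ[A] M)} = Nat.card (RP.Good A M N L) := rfl
  rw [hGood]
  have hh : (Nat.card (M →ₗ[A] N) : ℚ) ≠ 0 := by positivity
  have hm : (Nat.card (M ≃ₗ[A] M) : ℚ) ≠ 0 := by positivity
  have hn : (Nat.card (N ≃ₗ[A] N) : ℚ) ≠ 0 := by positivity
  rw [div_mul_div_comm, eq_div_iff (mul_ne_zero hh (mul_ne_zero hm hn))]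
  have key' : (Nat.card (RP.Good A M N L) : ℚ) * (Nat.card (N ≃ₗ[Polynomial F] N) : ℚ)
      * (Nat.card (M ≃ₗ[Polynomial F] M) : ℚ) * (Nat.card (M →ₗ[Polynomial F] N) : ℚ)
      = (Nat.card (ExtClasses A M N L) : ℚ) * (Nat.card (L ≃ₗ[A] L) : ℚ) := key
  linear_combination key'
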